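/- The orbit of the projective point [1,0,0,0] under the right action of G is exactly the set O1 = {[1, f(x,y), x, y] : x, y ∈ F}, which equals Ω \ {[0,1,0,0]} and has cardinality q^2. -/

import Mathlib

open Matrix

noncomputable section

abbrev F (n : ℕ) : Type := GaloisField 2 (2 * n + 1)

def om (n : ℕ) : ℕ := 2 ^ (n + 1)

def ff (n : ℕ) (x y : F n) : F n := x ^ (om n + 2) + x * y + y ^ om n

def Mmat (n : ℕ) (r a b : F n) : Matrix (Fin 4) (Fin 4) (F n) :=
  !![1, ff n a b, a, b;
     0, r ^ (om n + 2), 0, 0;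
     0, (a ^ (om n + 1) + b) * r, r, a ^ om n * r;
     0, a * r ^ (om n + 1), 0, r ^ (om n + 1)]

/-- The four spanning vectors of the polar line `π[x]`. -/
def polarGens (n : ℕ) (x : Fin 4 → F n) : Set (Fin 4 → F n) :=
  {![0, (x 0 * x 1 + x 2 * x 3) ^ 2 ^ n, x 0 ^ om n, x 2 ^ om n],
   ![(x 0 * x 1 + x 2 * x 3) ^ 2 ^ n, 0, x 3 ^ om n, x 1 ^ om n],
   ![x 0 ^ om n, x 3 ^ om n, 0, (x 0 * x 1 + x 2 * x 3) ^ 2 ^ n],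
   ![x 2 ^ om n, x 1 ^ om n, (x 0 * x 1 + x 2 * x 3) ^ 2 ^ n, 0]}

/-- The polar line `π[x]`, as a subspace of `F⁴`. -/
def polarSpan (n : ℕ) (x : Fin 4 → F n) : Submodule (F n) (Fin 4 → F n) :=
  Submodule.span (F n) (polarGens n x)

/-- The point set of `PG(3,q)`. -/
abbrev PG3 (n : ℕ) : Type := Projectivization (F n) (Fin 4 → F n)

/-- The graph `A(q)`: projective points of `PG(3,q)`, with `[x]` adjacent to `[y]`
iff `[x] ≠ [y]` and `y ∈ π[x]` (equivalently, `x ∈ π[y]`, the relation being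
symmetric).  Membership `y ∈ π[x]` does not depend on the choice of
representatives, so it is tested on the canonical representatives. -/
def Aq (n : ℕ) : SimpleGraph (PG3 n) where
  Adj P Q := P ≠ Q ∧ Q.rep ∈ polarSpan n P.rep ∧ P.rep ∈ polarSpan n Q.rep
  symm := ⟨fun _ _ h => ⟨h.1.symm, h.2.2, h.2.1⟩⟩
  loopless := ⟨fun _ h => h.1 rfl⟩

/-- A vector with a coordinate equal to `1` is nonzero. -/
lemma vne {n : ℕ} (v : Fin 4 → F n) (i : Fin 4) (h : v i = 1) : v ≠ 0 := by
  intro h0; rw [h0] at h; simp at h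

/-- The orbit `O1 = {[1, f(x,y), x, y] : x, y ∈ F}`. -/
def O1set (n : ℕ) : Set (PG3 n) :=
  {P | ∃ x y : F n, P = Projectivization.mk (F n) ![1, ff n x y, x, y] (vne _ 0 (by simp))}

/-- The Suzuki–Tits ovoid `Ω`. -/
def Omega (n : ℕ) : Set (PG3 n) :=
  {Projectivization.mk (F n) ![0, 1, 0, 0] (vne _ 1 (by simp))} ∪ O1set n


lemma row_eq (n : ℕ) (r a b : F n) :
    (![1, 0, 0, 0] : Fin 4 → F n) ᵥ* Mmat n r a b = ![1, ff n a b, a, b] := by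
  funext i
  fin_cases i <;> simp [Mmat, vecMul, dotProduct, Fin.sum_univ_four]

lemma mk_inj (n : ℕ) (x y x' y' : F n)
    (h : Projectivization.mk (F n) ![1, ff n x y, x, y] (vne _ 0 (by simp))
       = Projectivization.mk (F n) ![1, ff n x' y', x', y'] (vne _ 0 (by simp))) :
    x = x' ∧ y = y' := by
  rw [Projectivization.mk_eq_mk_iff] at h
  obtain ⟨c, hc⟩ := h
  have h0 := congrFun hc 0
  have h2 := congrFun hc 2
  have h3 := congrFun hc 3
  simp [Units.smul_def] at h0 h2 h3
  rw [h0] at h2 h3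
  simp at h2 h3
  exact ⟨h2.symm, h3.symm⟩

lemma pt_not_mem (n : ℕ) :
    Projectivization.mk (F n) ![0, 1, 0, 0] (vne _ 1 (by simp)) ∉ O1set n := by
  rintro ⟨x, y, h⟩
  rw [Projectivization.mk_eq_mk_iff] at h
  obtain ⟨c, hc⟩ := h
  have h0 := congrFun hc 0
  simp [Units.smul_def] at h0

theorem orbit_of_e0 (n : ℕ) (hn : 1 ≤ n) :
    {P : PG3 n | ∃ r a b : F n, r ≠ 0 ∧
        ∃ h : (![1, 0, 0, 0] : Fin 4 → F n) ᵥ* Mmat n r a b ≠ 0,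
          P = Projectivization.mk (F n) ((![1, 0, 0, 0] : Fin 4 → F n) ᵥ* Mmat n r a b) h}
      = O1set n ∧
    O1set n = Omega n \ {Projectivization.mk (F n) ![0, 1, 0, 0] (vne _ 1 (by simp))} ∧
    Nat.card (O1set n) = (2 ^ (2 * n + 1)) ^ 2 := by
  constructor
  · ext P
    constructor
    · rintro ⟨r, a, b, hr, h, rfl⟩
      refine ⟨a, b, ?_⟩
      congr 1
      exact row_eq n r a b
    · rintro ⟨x, y, rfl⟩
      have h : (![1, 0, 0, 0] : Fin 4 → F n) ᵥ* Mmat n 1 x y ≠ 0 := by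
        rw [row_eq]; exact vne _ 0 (by simp)
      refine ⟨1, x, y, one_ne_zero, h, ?_⟩
      congr 1
      exact (row_eq n 1 x y).symm
  constructor
  · ext P
    constructor
    · intro hP
      refine ⟨Or.inr hP, ?_⟩
      intro h
      simp only [Set.mem_singleton_iff] at h
      exact pt_not_mem n (h ▸ hP)
    · rintro ⟨hP, hne⟩
      rcases hP with h | h
      · exact absurd h hne
      · exact h
  · have hb : Function.Bijective (fun p : F n × F n =>
        (⟨Projectivization.mk (F n) ![1, ff n p.1 p.2, p.1, p.2] (vne _ 0 (by simp)),
          ⟨p.1, p.2, rfl⟩⟩ : O1set n)) := by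
      constructor
      · rintro ⟨x, y⟩ ⟨x', y'⟩ h
        simp only [Subtype.mk_eq_mk] at h
        obtain ⟨h1, h2⟩ := mk_inj n x y x' y' (congrArg Subtype.val h)
        simp [h1, h2]
      · rintro ⟨P, x, y, rfl⟩
        exact ⟨⟨x, y⟩, rfl⟩
    have := Nat.card_eq_of_bijective _ hb
    rw [Nat.card_prod] at this
    have hF : Nat.card (F n) = 2 ^ (2 * n + 1) := GaloisField.card 2 (2 * n + 1) (by omega)
    rw [sq, ← hF]
    exact this.symm
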